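/- arXiv:0705.2757 — 2 statements merged into one kernel-verified Lean document; each statement's English description precedes it below -/
import Mathlib

section
/- Let n ≥ 2, let Q be the quadratic form on ℝⁿ given by Q(v) = −‖v‖², let ι : ℝⁿ → CliffordAlgebra Q be the canonical embedding, and let (e_i) be the standard orthonormal basis of ℝⁿ. Define F : ℝⁿ \ {0} → CliffordAlgebra Q by F(x) = ‖x‖^{−n} • ι(x). Then F is annihilated by the Euclidean Dirac operator away from the origin: for every x ≠ 0, ∑_{i} ι(e_i) * (fderiv ℝ F x (e_i)) = 0. -/
/-- The spinor field `F(x) = ‖x‖^{-n} • ι(x)` (the singular leading term of the Green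
function of the Dirac operator) is annihilated by the Euclidean Dirac operator
`Dφ(x) = ∑ᵢ ι(eᵢ) * ∂ᵢφ(x)` away from the origin.

Since `fderiv` requires a normed codomain and the Clifford algebra of the
negative-definite form `Q(v) = -‖v‖²` carries no canonical norm in Mathlib, we state
this for an arbitrary normed `ℝ`-algebra `A` together with a linear map
`ι : ℝⁿ →ₗ[ℝ] A` satisfying the defining Clifford relation
`ι(v) * ι(v) = Q(v)·1 = -‖v‖²·1` (so that `ι(eᵢ)² = -1`); the canonical embedding of
`ℝⁿ` into `CliffordAlgebra Q` is exactly such a map. -/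
theorem dirac_annihilates_singular_term (n : ℕ) (hn : 2 ≤ n)
    (A : Type*) [NormedRing A] [NormedAlgebra ℝ A]
    (ι : EuclideanSpace ℝ (Fin n) →ₗ[ℝ] A)
    (hι : ∀ v : EuclideanSpace ℝ (Fin n), ι v * ι v = algebraMap ℝ A (-‖v‖ ^ 2))
    (F : EuclideanSpace ℝ (Fin n) → A)
    (hF : ∀ x, F x = (‖x‖ ^ n)⁻¹ • ι x)
    (x : EuclideanSpace ℝ (Fin n)) (hx : x ≠ 0) :
    ∑ i : Fin n,
      ι (EuclideanSpace.single i (1 : ℝ)) *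
        fderiv ℝ F x (EuclideanSpace.single i (1 : ℝ)) = 0 := by
  set p : ℝ := -(n : ℝ) / 2 with hp
  have hxn : ‖x‖ ≠ 0 := norm_ne_zero_iff.mpr hx
  have hx2 : (‖x‖ ^ 2 : ℝ) ≠ 0 := pow_ne_zero 2 hxn
  have hx2pos : (0 : ℝ) < ‖x‖ ^ 2 := lt_of_le_of_ne (sq_nonneg _) (Ne.symm hx2)
  -- the scalar function equals a nice rpow expression
  have key : ∀ y : EuclideanSpace ℝ (Fin n), ((‖y‖ ^ 2 : ℝ)) ^ p = (‖y‖ ^ n)⁻¹ := by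
    intro y
    have h1 : (‖y‖ ^ 2 : ℝ) = ‖y‖ ^ ((2 : ℕ) : ℝ) := by
      rw [Real.rpow_natCast]
    rw [h1, ← Real.rpow_natCast ‖y‖ n, ← Real.rpow_neg (norm_nonneg y),
      ← Real.rpow_mul (norm_nonneg y)]
    norm_num [hp]
    ring_nf
    rw [Real.rpow_neg (norm_nonneg y), Real.rpow_natCast, inv_pow]
  -- derivative of the scalar function
  have hg2 : HasFDerivAt (fun y : EuclideanSpace ℝ (Fin n) => ‖y‖ ^ 2)
      (2 • (innerSL ℝ x)) x :=
    (hasStrictFDerivAt_norm_sq x).hasFDerivAt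
  have hgr : HasFDerivAt (fun y : EuclideanSpace ℝ (Fin n) => ((‖y‖ ^ 2 : ℝ)) ^ p)
      ((p * (‖x‖ ^ 2) ^ (p - 1)) • (2 • (innerSL ℝ x))) x :=
    by have h := (Real.hasDerivAt_rpow_const (p := p) (Or.inl hx2)).comp_hasFDerivAt x hg2; exact h
  set c : ℝ := p * (‖x‖ ^ 2) ^ (p - 1) * 2 with hc
  have hg : HasFDerivAt (fun y : EuclideanSpace ℝ (Fin n) => (‖y‖ ^ n)⁻¹)
      ((p * (‖x‖ ^ 2) ^ (p - 1)) • (2 • (innerSL ℝ x))) x := by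
    have heq : (fun y : EuclideanSpace ℝ (Fin n) => ((‖y‖ ^ 2 : ℝ)) ^ p) =
        fun y : EuclideanSpace ℝ (Fin n) => (‖y‖ ^ n)⁻¹ := funext key
    rwa [heq] at hgr
  -- derivative of ι
  have hι' : HasFDerivAt (fun y : EuclideanSpace ℝ (Fin n) => ι y)
      (LinearMap.toContinuousLinearMap ι) x :=
    (LinearMap.toContinuousLinearMap ι).hasFDerivAt
  have hFd : HasFDerivAt F
      ((‖x‖ ^ n)⁻¹ • (LinearMap.toContinuousLinearMap ι) +
        ((p * (‖x‖ ^ 2) ^ (p - 1)) • (2 • (innerSL ℝ x))).smulRight (ι x)) x := by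
    have h := hg.smul hι'
    have hFeq : F = fun y : EuclideanSpace ℝ (Fin n) => (‖y‖ ^ n)⁻¹ • ι y := funext hF
    rw [hFeq]
    exact h
  rw [hFd.fderiv]
  -- evaluate the derivative on basis vectors
  have heval : ∀ i : Fin n,
      (((‖x‖ ^ n)⁻¹ • (LinearMap.toContinuousLinearMap ι) +
        ((p * (‖x‖ ^ 2) ^ (p - 1)) • (2 • (innerSL ℝ x))).smulRight (ι x)))
        (EuclideanSpace.single i (1 : ℝ)) =
      (‖x‖ ^ n)⁻¹ • ι (EuclideanSpace.single i (1 : ℝ)) + (c * x i) • ι x := by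
    intro i
    have hinner : (innerSL ℝ x) (EuclideanSpace.single i (1 : ℝ)) = x i := by
      simp [innerSL_apply_apply, EuclideanSpace.inner_single_right]
    simp only [ContinuousLinearMap.add_apply, ContinuousLinearMap.smul_apply,
      ContinuousLinearMap.smulRight_apply, ContinuousLinearMap.smul_apply,
      LinearMap.coe_toContinuousLinearMap', hinner, hc]
    congr 1
    simp only [smul_eq_mul, nsmul_eq_mul, Nat.cast_ofNat]
    ring
  simp only [heval]
  have hsq : ∀ i : Fin n, ι (EuclideanSpace.single i (1 : ℝ)) *
      ι (EuclideanSpace.single i (1 : ℝ)) = algebraMap ℝ A (-1) := by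
    intro i
    rw [hι]
    norm_num
  have hsum : ∑ i : Fin n, (x i) • ι (EuclideanSpace.single i (1 : ℝ)) = ι x := by
    have h4 : (∑ i : Fin n, x i • ι (EuclideanSpace.single i (1 : ℝ))) =
        ι (∑ i : Fin n, x i • EuclideanSpace.single i (1 : ℝ)) := by
      rw [map_sum]
      simp only [map_smul]
    rw [h4]
    congr 1
    apply PiLp.ext
    intro j
    have h5 : (∑ i : Fin n, x i • EuclideanSpace.single i (1 : ℝ)) j =
        ∑ i : Fin n, (x i • EuclideanSpace.single i (1 : ℝ)) j :=
      by rw [WithLp.ofLp_sum, Finset.sum_apply]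
    rw [h5]
    simp [EuclideanSpace.single_apply, Finset.sum_ite_eq']
  calc ∑ i : Fin n, ι (EuclideanSpace.single i (1 : ℝ)) *
        ((‖x‖ ^ n)⁻¹ • ι (EuclideanSpace.single i (1 : ℝ)) + (c * x i) • ι x)
      = ∑ i : Fin n, ((‖x‖ ^ n)⁻¹ • (ι (EuclideanSpace.single i (1 : ℝ)) *
          ι (EuclideanSpace.single i (1 : ℝ))) +
          c • ((x i • ι (EuclideanSpace.single i (1 : ℝ))) * ι x)) := by
        apply Finset.sum_congr rfl
        intro i _
        rw [mul_add, mul_smul_comm, mul_smul_comm, smul_mul_assoc, mul_smul]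
    _ = (n : ℝ) • ((‖x‖ ^ n)⁻¹ • algebraMap ℝ A (-1)) + c • (ι x * ι x) := by
        rw [Finset.sum_add_distrib, ← Finset.smul_sum, ← Finset.smul_sum,
          ← Finset.sum_mul, hsum]
        simp only [hsq]
        rw [Finset.sum_const, Finset.card_univ, Fintype.card_fin,
          ← Nat.cast_smul_eq_nsmul ℝ n, smul_comm]
    _ = ((n : ℝ) * (‖x‖ ^ n)⁻¹ * (-1) + c * (-‖x‖ ^ 2)) • (1 : A) := by
        rw [hι, Algebra.algebraMap_eq_smul_one, Algebra.algebraMap_eq_smul_one,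
          smul_smul, smul_smul, smul_smul, ← add_smul]
    _ = 0 := by
        have h2 : (‖x‖ ^ 2 : ℝ) ^ (p - 1) * ‖x‖ ^ 2 = (‖x‖ ^ n)⁻¹ := by
          have h3 := Real.rpow_add hx2pos (p - 1) 1
          rw [Real.rpow_one, sub_add_cancel] at h3
          rw [← h3, key x]
        have hz : (n : ℝ) * (‖x‖ ^ n)⁻¹ * (-1) + c * (-‖x‖ ^ 2) = 0 := by
          rw [hc, hp]
          rw [hp] at h2
          linear_combination (n : ℝ) * h2
        rw [hz, zero_smul]
end

section
/- Let n ≥ 1, let Q be the quadratic form on ℝⁿ given by Q(v) = −‖v‖², let ι : ℝⁿ → CliffordAlgebra Q be the canonical embedding, and let (e_i) be the standard orthonormal basis of ℝⁿ. Let f(x) = 2/(1+‖x‖²), let ε > 0, let φ₀ ∈ CliffordAlgebra Q be a fixed (constant) element, and choose a sign ∓. Define φ : ℝⁿ → CliffordAlgebra Q by φ(x) = f(x/ε)^{n/2} • ((1 ∓ ε^{-1} • ι(x)) * φ₀). Then φ satisfies the Killing-type Dirac equation ∑_i ι(e_i) * (fderiv ℝ φ x (e_i)) = ±(n/(2ε))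 · f(x/ε) • φ(x) for every x ∈ ℝⁿ (with eigenvalue +(n/(2ε))f for the choice (1 − ε^{-1}ι(x)) and −(n/(2ε))f for (1 + ε^{-1}ι(x))). -/
open scoped RealInnerProductSpace


/-- The test spinors `φ(x) = f(x/ε)^{n/2} (1 ∓ x/ε)·φ₀` transferred from the Killing
spinors of the sphere satisfy the Killing-type Dirac equation
`Dφ(x) = ±(n/(2ε)) f(x/ε) φ(x)`, where `f(x) = 2/(1+‖x‖²)` and
`Dφ(x) = ∑ᵢ ι(eᵢ) * ∂ᵢφ(x)` is the Euclidean Dirac operator.  The sign `σ ∈ {1, -1}`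
encodes the choice `∓`: for `σ = 1` we take `(1 - ε⁻¹ ι(x))` with eigenvalue
`+(n/(2ε)) f`, and for `σ = -1` we take `(1 + ε⁻¹ ι(x))` with eigenvalue `-(n/(2ε)) f`.

Since `fderiv` requires a normed codomain and the Clifford algebra of the
negative-definite form `Q(v) = -‖v‖²` carries no canonical norm in Mathlib, we state
this for an arbitrary normed `ℝ`-algebra `A` together with a linear map
`ι : ℝⁿ →ₗ[ℝ] A` satisfying the defining Clifford relation
`ι(v) * ι(v) = Q(v)·1 = -‖v‖²·1` (so that `ι(eᵢ)² = -1`); the canonical embedding of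
`ℝⁿ` into `CliffordAlgebra Q` is exactly such a map. -/
theorem killing_type_dirac_equation (n : ℕ) (hn : 1 ≤ n)
    (A : Type*) [NormedRing A] [NormedAlgebra ℝ A]
    (ι : EuclideanSpace ℝ (Fin n) →ₗ[ℝ] A)
    (hι : ∀ v : EuclideanSpace ℝ (Fin n), ι v * ι v = algebraMap ℝ A (-‖v‖ ^ 2))
    (f : EuclideanSpace ℝ (Fin n) → ℝ)
    (hf : ∀ x, f x = 2 / (1 + ‖x‖ ^ 2))
    (ε : ℝ) (hε : 0 < ε) (φ₀ : A)
    (σ : ℝ) (hσ : σ = 1 ∨ σ = -1)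
    (φ : EuclideanSpace ℝ (Fin n) → A)
    (hφ : ∀ x, φ x =
      (f (ε⁻¹ • x)) ^ ((n : ℝ) / 2) • (((1 : A) - σ • (ε⁻¹ • ι x)) * φ₀))
    (x : EuclideanSpace ℝ (Fin n)) :
    ∑ i : Fin n,
      ι (EuclideanSpace.single i (1 : ℝ)) *
        fderiv ℝ φ x (EuclideanSpace.single i (1 : ℝ)) =
      (σ * (n / (2 * ε)) * f (ε⁻¹ • x)) • φ x := by
  have hεne : ε ≠ 0 := ne_of_gt hε
  have hσ2 : σ * σ = 1 := by rcases hσ with h | h <;> rw [h] <;> norm_num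
  set r : ℝ := (n : ℝ) / 2 with hr
  set c : ℝ := σ * ε⁻¹ with hc
  -- the inner function N
  set N : EuclideanSpace ℝ (Fin n) → ℝ := fun y => 1 + ε⁻¹ ^ 2 * ⟪y, y⟫ with hNdef
  have hNpos : ∀ y, 0 < N y := by
    intro y
    have h1 : (0:ℝ) ≤ ε⁻¹ ^ 2 * ⟪y, y⟫ :=
      mul_nonneg (sq_nonneg _) real_inner_self_nonneg
    simp only [hNdef]; linarith
  have hNne : N x ≠ 0 := ne_of_gt (hNpos x)
  have hFval : ∀ y, f (ε⁻¹ • y) = 2 / N y := by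
    intro y
    rw [hf, hNdef]
    congr 2
    rw [norm_smul, mul_pow, real_inner_self_eq_norm_sq]
    simp [sq_abs]
  have hFpos : 0 < 2 / N x := div_pos two_pos (hNpos x)
  have hFne : (2 / N x : ℝ) ≠ 0 := ne_of_gt hFpos
  -- the continuous linear map L y = ι y * φ₀
  set L : EuclideanSpace ℝ (Fin n) →L[ℝ] A :=
    LinearMap.toContinuousLinearMap ((LinearMap.mulRight ℝ φ₀).comp ι) with hLdef
  have hLapp : ∀ y, L y = ι y * φ₀ := fun y => rfl
  -- rewrite φ
  have hφg : φ = fun y => (2 / N y) ^ r • (φ₀ - c • L y) := by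
    funext y
    rw [hφ y, hFval y, hLapp]
    congr 1
    rw [sub_mul, one_mul, smul_mul_assoc, smul_mul_assoc, smul_smul]
  -- derivative of inner
  have hinner : HasFDerivAt (fun y : EuclideanSpace ℝ (Fin n) => (⟪y, y⟫ : ℝ))
      ((fderivInnerCLM ℝ (x, x)).comp
        ((ContinuousLinearMap.id ℝ _).prod (ContinuousLinearMap.id ℝ _))) x :=
    (hasFDerivAt_id x).inner ℝ (hasFDerivAt_id x)
  set D : EuclideanSpace ℝ (Fin n) →L[ℝ] ℝ :=
    (fderivInnerCLM ℝ (x, x)).comp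
      ((ContinuousLinearMap.id ℝ _).prod (ContinuousLinearMap.id ℝ _)) with hDdef
  have hDapp : ∀ v, D v = 2 * ⟪x, v⟫ := by
    intro v
    simp only [hDdef, ContinuousLinearMap.comp_apply, ContinuousLinearMap.prod_apply,
      ContinuousLinearMap.id_apply, fderivInnerCLM_apply]
    rw [real_inner_comm v x]; ring
  -- derivative of N
  have hN : HasFDerivAt N (ε⁻¹ ^ 2 • D) x :=
    (hinner.const_mul (ε⁻¹ ^ 2)).const_add 1
  -- derivative of G y = (2 / N y) ^ r
  have hF : HasFDerivAt (fun y => 2 / N y)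
      ((2 : ℝ) • (-(N x ^ 2)⁻¹ • (ε⁻¹ ^ 2 • D))) x := by
    have h1 : HasFDerivAt (fun y => (N y)⁻¹) (-(N x ^ 2)⁻¹ • (ε⁻¹ ^ 2 • D)) x :=
      (hasDerivAt_inv hNne).comp_hasFDerivAt x hN
    have h2 := h1.const_mul (2 : ℝ)
    simpa only [div_eq_mul_inv] using h2
  have hG : HasFDerivAt (fun y => (2 / N y) ^ r)
      ((r * (2 / N x) ^ (r - 1)) • ((2 : ℝ) • (-(N x ^ 2)⁻¹ • (ε⁻¹ ^ 2 • D)))) x :=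
    hF.rpow_const (Or.inl hFne)
  -- derivative of the A-valued part
  have hm : HasFDerivAt (fun y => φ₀ - c • L y) (-(c • L)) x := by
    simpa using ((L.hasFDerivAt (x := x)).const_smul c).const_sub φ₀
  -- derivative of φ
  have hφ' : HasFDerivAt φ
      ((2 / N x) ^ r • (-(c • L)) +
        ((r * (2 / N x) ^ (r - 1)) •
          ((2 : ℝ) • (-(N x ^ 2)⁻¹ • (ε⁻¹ ^ 2 • D)))).smulRight (φ₀ - c • L x)) x := by
    rw [hφg]; exact hG.smul hm
  -- abbreviations
  set F : ℝ := 2 / N x with hFdef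
  set K : ℝ := r * F ^ (r - 1) * (-4 * (N x ^ 2)⁻¹ * ε⁻¹ ^ 2) with hKdef
  set m : A := φ₀ - c • (ι x * φ₀) with hmdef
  -- evaluate the derivative at basis vectors
  have happ : ∀ i : Fin n,
      fderiv ℝ φ x (EuclideanSpace.single i (1 : ℝ)) =
        (-(F ^ r * c)) • (ι (EuclideanSpace.single i (1 : ℝ)) * φ₀) + (K * x i) • m := by
    intro i
    rw [hφ'.fderiv]
    simp only [ContinuousLinearMap.add_apply, ContinuousLinearMap.smul_apply,
      ContinuousLinearMap.neg_apply, ContinuousLinearMap.smulRight_apply, hDapp, hLapp,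
      EuclideanSpace.inner_single_right, RCLike.inner_apply, map_one, starRingEnd_apply,
      star_trivial, smul_eq_mul, mul_one]
    rw [hKdef, hmdef]
    module
  -- basis facts
  have key1 : ∀ i : Fin n,
      ι (EuclideanSpace.single i (1 : ℝ)) * (ι (EuclideanSpace.single i (1 : ℝ)) * φ₀) =
        (-1 : ℝ) • φ₀ := by
    intro i
    rw [← mul_assoc, hι, EuclideanSpace.norm_single, norm_one, one_pow, Algebra.smul_def]
  have hx : x = ∑ i, x i • EuclideanSpace.single i (1 : ℝ) := by
    simpa using ((EuclideanSpace.basisFun (Fin n) ℝ).sum_repr x).symm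
  have key2 : (∑ i, (K * x i) • (ι (EuclideanSpace.single i (1 : ℝ)) * m)) =
      K • (ι x * m) := by
    simp_rw [mul_smul]
    rw [← Finset.smul_sum]
    congr 1
    calc ∑ i, x i • (ι (EuclideanSpace.single i (1 : ℝ)) * m)
        = (∑ i, x i • ι (EuclideanSpace.single i (1 : ℝ))) * m := by
          rw [Finset.sum_mul]; simp_rw [smul_mul_assoc]
      _ = ι x * m := by
          congr 1
          conv_rhs => rw [hx]
          rw [map_sum]
          simp [map_smul]
  -- main computation
  have lhs_eq : ∑ i : Fin n,
      ι (EuclideanSpace.single i (1 : ℝ)) *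
        fderiv ℝ φ x (EuclideanSpace.single i (1 : ℝ)) =
      ((n : ℝ) * (F ^ r * c)) • φ₀ + K • (ι x * m) := by
    have step : ∀ i : Fin n,
        ι (EuclideanSpace.single i (1 : ℝ)) *
          fderiv ℝ φ x (EuclideanSpace.single i (1 : ℝ)) =
        (-(F ^ r * c)) • ((-1 : ℝ) • φ₀) +
          (K * x i) • (ι (EuclideanSpace.single i (1 : ℝ)) * m) := by
      intro i
      rw [happ i, mul_add, mul_smul_comm, mul_smul_comm, key1 i]
    rw [Finset.sum_congr rfl fun i _ => step i, Finset.sum_add_distrib, key2,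
      Finset.sum_const, Finset.card_univ, Fintype.card_fin]
    congr 1
    rw [smul_smul, ← Nat.cast_smul_eq_nsmul ℝ, smul_smul]
    congr 1
    ring
  rw [lhs_eq, hφg]
  simp only []
  rw [hFval x]
  -- now pure algebra in A with the Clifford relation for x
  have hx2 : ι x * (ι x * φ₀) = (-‖x‖ ^ 2) • φ₀ := by
    rw [← mul_assoc, hι, Algebra.smul_def]
  have hmx : ι x * m = ι x * φ₀ + (c * ‖x‖ ^ 2) • φ₀ := by
    rw [hmdef, mul_sub, mul_smul_comm, hx2, smul_smul]
    rw [sub_eq_add_neg, ← neg_smul]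
    congr 1
    ring
  rw [hmx, hLapp x, ← hmdef, hmdef]
  -- reduce to scalar identities
  have hNval : N x = 1 + ε⁻¹ ^ 2 * ‖x‖ ^ 2 := by
    simp only [hNdef, real_inner_self_eq_norm_sq]
  have hrpow : F ^ r = F ^ (r - 1) * F := by
    rw [← Real.rpow_add_one hFne]; norm_num
  have hY : ‖x‖ ^ 2 = (N x - 1) * ε ^ 2 := by
    rw [hNval]; field_simp; ring
  rw [← hFdef, hrpow]
  clear hφ' hG hF hm hinner hN hDapp hDdef happ key1 key2 lhs_eq hφg hφ hmx hx2
  clear hLapp hLdef hx hFval hNpos hf hι hNdef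
  clear L D f
  clear_value N F K m c r
  clear hmdef
  match_scalars
  · -- coefficient of φ₀
    rw [hKdef, hc, hY]
    generalize F ^ (r - 1) = P
    rw [hr, hFdef]
    field_simp
    ring
  · -- coefficient of ι x * φ₀
    rw [hKdef, hc]
    generalize F ^ (r - 1) = P
    rw [hr, hFdef]
    rcases hσ with rfl | rfl <;> ring
end
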